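/- Let G be a bidirected tree with seed set S and boost set B. For every non-seed node u and every neighbor v of u, the activation probability of u in the subtree G_{u\v} satisfies ap_B(u\v) = 1 − ∏_{w ∈ N(u) \ {v}} (1 − ap_B(w\u) · p^B_{wu}). -/

import Mathlib

open Finset
open scoped Classical

noncomputable section

variable {V : Type*}

/-- The probability weight of the live-edge configuration `L ⊆ E`:
each edge `e ∈ E` is independently live with probability `p e`. -/
def edgeWeight [DecidableEq V] (E : Finset (V × V)) (p : V × V → ℝ)
    (L : Finset (V × V)) : ℝ :=
  (∏ e ∈ L, p e) * ∏ e ∈ E \ L, (1 - p e)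

/-- `v` is activated in configuration `L`: it is reachable from some seed in `S`
through live (directed) edges. -/
def Reaches (L : Finset (V × V)) (S : Finset V) (v : V) : Prop :=
  ∃ s ∈ S, Relation.ReflTransGen (fun a b => (a, b) ∈ L) s v

/-- Activation probability of node `v` under the live-edge model with edge set `E`,
edge probabilities `p`, and seed set `S`. -/
def ap [Fintype V] [DecidableEq V] (E : Finset (V × V)) (p : V × V → ℝ)
    (S : Finset V) (v : V) : ℝ :=
  ∑ L ∈ E.powerset, edgeWeight E p L * (if Reaches L S v then 1 else 0)

/-- Expected number of activated nodes lying in the node set `W`. -/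
def spreadOn [Fintype V] [DecidableEq V] (E : Finset (V × V)) (p : V × V → ℝ)
    (S W : Finset V) : ℝ :=
  ∑ L ∈ E.powerset, edgeWeight E p L * ((W.filter (fun v => Reaches L S v)).card : ℝ)

/-- The influence spread `σ_S`: expected total number of activated nodes. -/
def spread [Fintype V] [DecidableEq V] (E : Finset (V × V)) (p : V × V → ℝ)
    (S : Finset V) : ℝ :=
  spreadOn E p S Finset.univ

/-- Boosted edge probabilities: edges pointing into a boosted node use `p'`. -/
def pB (p p' : V × V → ℝ) (B : Finset V) : V × V → ℝ :=
  fun e => if e.2 ∈ B then p' e else p e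

/-- The bidirected edge set of an undirected graph: each undirected edge is
replaced by the two directed edges. -/
def treeEdges [Fintype V] [DecidableEq V] (T : SimpleGraph V) [DecidableRel T.Adj] :
    Finset (V × V) :=
  Finset.univ.filter (fun e => T.Adj e.1 e.2)

/-- `apSub E p S v u` is `ap_B(v\u)`: the activation probability of `v` in the
subtree `G_{v\u}` obtained by removing the directed edges `(u,v)` and `(v,u)`. -/
def apSub [Fintype V] [DecidableEq V] (E : Finset (V × V)) (p : V × V → ℝ)
    (S : Finset V) (v u : V) : ℝ :=
  ap (E \ {(u, v), (v, u)}) p S v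

/-- The set of nodes of the connected component containing `v` w.r.t. edge set `E`. -/
def comp [Fintype V] [DecidableEq V] (E : Finset (V × V)) (v : V) : Finset V :=
  Finset.univ.filter (fun w => Relation.ReflTransGen (fun a b => (a, b) ∈ E) v w)

/-- `gain E p S v u` is `g_B(v\u)`: in the subtree `G_{v\u}`, the expected number of
activated nodes when the seed set is `(S ∩ V(G_{v\u})) ∪ {v}` minus the expected
number when the seed set is `S ∩ V(G_{v\u})`. -/
def gain [Fintype V] [DecidableEq V] (E : Finset (V × V)) (p : V × V → ℝ)
    (S : Finset V) (v u : V) : ℝ :=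
  spreadOn (E \ {(u, v), (v, u)}) p (insert v (S ∩ comp (E \ {(u, v), (v, u)}) v))
      (comp (E \ {(u, v), (v, u)}) v)
    - spreadOn (E \ {(u, v), (v, u)}) p (S ∩ comp (E \ {(u, v), (v, u)}) v)
      (comp (E \ {(u, v), (v, u)}) v)

section Core
variable [DecidableEq V] (p : V × V → ℝ)

lemma sum_edgeWeight (E : Finset (V × V)) :
    ∑ L ∈ E.powerset, edgeWeight E p L = 1 := by
  have h := Finset.prod_add p (fun e => 1 - p e) E
  simp only [add_sub_cancel, Finset.prod_const_one] at h
  simp only [edgeWeight]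
  exact h.symm

lemma edgeWeight_union {E1 E2 L1 L2 : Finset (V × V)} (hE : Disjoint E1 E2)
    (h1 : L1 ⊆ E1) (h2 : L2 ⊆ E2) :
    edgeWeight (E1 ∪ E2) p (L1 ∪ L2) = edgeWeight E1 p L1 * edgeWeight E2 p L2 := by
  have hL : Disjoint L1 L2 := hE.mono h1 h2
  have hsd : (E1 ∪ E2) \ (L1 ∪ L2) = (E1 \ L1) ∪ (E2 \ L2) := by
    ext e
    simp only [Finset.mem_sdiff, Finset.mem_union]
    constructor
    · rintro ⟨h | h, hn⟩
      · exact Or.inl ⟨h, fun hh => hn (Or.inl hh)⟩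
      · exact Or.inr ⟨h, fun hh => hn (Or.inr hh)⟩
    · rintro (⟨he, hn⟩ | ⟨he, hn⟩)
      · refine ⟨Or.inl he, ?_⟩
        rintro (hh | hh)
        · exact hn hh
        · exact (Finset.disjoint_left.mp hE he) (h2 hh)
      · refine ⟨Or.inr he, ?_⟩
        rintro (hh | hh)
        · exact (Finset.disjoint_right.mp hE he) (h1 hh)
        · exact hn hh
  have hd2 : Disjoint (E1 \ L1) (E2 \ L2) :=
    hE.mono (Finset.sdiff_subset) (Finset.sdiff_subset)
  rw [edgeWeight, edgeWeight, edgeWeight, Finset.prod_union hL, hsd, Finset.prod_union hd2]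
  ring

lemma factor2 {E1 E2 : Finset (V × V)} (hE : Disjoint E1 E2)
    (f g : Finset (V × V) → ℝ) :
    ∑ L ∈ (E1 ∪ E2).powerset, edgeWeight (E1 ∪ E2) p L * (f (L ∩ E1) * g (L ∩ E2)) =
      (∑ M ∈ E1.powerset, edgeWeight E1 p M * f M) *
      (∑ M ∈ E2.powerset, edgeWeight E2 p M * g M) := by
  rw [Finset.sum_mul_sum, ← Finset.sum_product']
  refine Finset.sum_nbij' (fun L => (L ∩ E1, L ∩ E2)) (fun P => P.1 ∪ P.2) ?_ ?_ ?_ ?_ ?_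
  · intro L hL
    simp only [Finset.mem_product, Finset.mem_powerset]
    exact ⟨Finset.inter_subset_right, Finset.inter_subset_right⟩
  · intro P hP
    simp only [Finset.mem_product, Finset.mem_powerset] at hP ⊢
    exact Finset.union_subset_union hP.1 hP.2
  · intro L hL
    simp only [Finset.mem_powerset] at hL
    dsimp only
    rw [← Finset.inter_union_distrib_left, Finset.inter_eq_left.mpr hL]
  · intro P hP
    simp only [Finset.mem_product, Finset.mem_powerset] at hP
    obtain ⟨h1, h2⟩ := hP
    have e1 : (P.1 ∪ P.2) ∩ E1 = P.1 := by
      ext x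
      simp only [Finset.mem_inter, Finset.mem_union]
      constructor
      · rintro ⟨h | h, hx⟩
        · exact h
        · exact absurd hx (Finset.disjoint_right.mp hE (h2 h))
      · intro h; exact ⟨Or.inl h, h1 h⟩
    have e2 : (P.1 ∪ P.2) ∩ E2 = P.2 := by
      ext x
      simp only [Finset.mem_inter, Finset.mem_union]
      constructor
      · rintro ⟨h | h, hx⟩
        · exact absurd hx (Finset.disjoint_left.mp hE (h1 h))
        · exact h
      · intro h; exact ⟨Or.inr h, h2 h⟩
    rw [e1, e2]
  · intro L hL
    simp only [Finset.mem_powerset] at hL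
    have hunion : L = (L ∩ E1) ∪ (L ∩ E2) := by
      rw [← Finset.inter_union_distrib_left, Finset.inter_eq_left.mpr hL]
    rw [show edgeWeight (E1 ∪ E2) p L = edgeWeight (E1 ∪ E2) p ((L ∩ E1) ∪ (L ∩ E2)) by
        rw [← hunion],
      edgeWeight_union p hE Finset.inter_subset_right Finset.inter_subset_right]
    ring

lemma factorN {ι : Type*} [DecidableEq ι] (I : Finset ι) (Ei : ι → Finset (V × V))
    (hdisj : ∀ i ∈ I, ∀ j ∈ I, i ≠ j → Disjoint (Ei i) (Ei j))
    (f : ι → Finset (V × V) → ℝ) :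
    ∑ L ∈ (I.biUnion Ei).powerset,
        edgeWeight (I.biUnion Ei) p L * ∏ i ∈ I, f i (L ∩ Ei i) =
      ∏ i ∈ I, ∑ M ∈ (Ei i).powerset, edgeWeight (Ei i) p M * f i M := by
  induction I using Finset.induction_on with
  | empty => simp [edgeWeight]
  | @insert a I ha IH =>
    have hd : Disjoint (Ei a) (I.biUnion Ei) := by
      rw [Finset.disjoint_biUnion_right]
      intro j hj
      exact hdisj a (Finset.mem_insert_self a I) j (Finset.mem_insert_of_mem hj)
        (fun h => ha (h ▸ hj))
    have hsum : ∀ L ∈ ((insert a I).biUnion Ei).powerset,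
        edgeWeight ((insert a I).biUnion Ei) p L * ∏ i ∈ insert a I, f i (L ∩ Ei i) =
        edgeWeight (Ei a ∪ I.biUnion Ei) p L *
          (f a (L ∩ Ei a) * (fun M => ∏ i ∈ I, f i (M ∩ Ei i)) (L ∩ I.biUnion Ei)) := by
      intro L hL
      rw [Finset.biUnion_insert]
      congr 1
      rw [Finset.prod_insert ha]
      congr 1
      refine Finset.prod_congr rfl fun i hi => ?_
      congr 1
      rw [Finset.inter_assoc, Finset.inter_eq_right.mpr (Finset.subset_biUnion_of_mem Ei hi)]
    rw [Finset.sum_congr rfl hsum]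
    rw [show ((insert a I).biUnion Ei) = Ei a ∪ I.biUnion Ei from Finset.biUnion_insert]
    rw [factor2 p hd (f a) (fun M => ∏ i ∈ I, f i (M ∩ Ei i))]
    rw [IH (fun i hi => fun j hj => hdisj i (Finset.mem_insert_of_mem hi) j
      (Finset.mem_insert_of_mem hj))]
    rw [Finset.prod_insert ha]
end Core

section Core2
variable [Fintype V] [DecidableEq V] (p : V × V → ℝ)

omit [Fintype V] [DecidableEq V] in
lemma Reaches.mono {L L' : Finset (V × V)} {S : Finset V} {x : V}
    (h : L ⊆ L') (hr : Reaches L S x) : Reaches L' S x := by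
  obtain ⟨s, hs, hc⟩ := hr
  exact ⟨s, hs, Relation.ReflTransGen.mono (fun a b hab => h hab) _ _ hc⟩

lemma ap_split {E1 E2 : Finset (V × V)} (hE : Disjoint E1 E2) (S : Finset V) (x : V)
    (h : ∀ L ∈ (E1 ∪ E2).powerset, (Reaches L S x ↔ Reaches (L ∩ E1) S x)) :
    ap (E1 ∪ E2) p S x = ap E1 p S x := by
  rw [ap]
  have hstep : ∀ L ∈ (E1 ∪ E2).powerset,
      edgeWeight (E1 ∪ E2) p L * (if Reaches L S x then 1 else 0) =
      edgeWeight (E1 ∪ E2) p L *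
        ((fun M => if Reaches M S x then (1:ℝ) else 0) (L ∩ E1) *
         (fun _ => (1:ℝ)) (L ∩ E2)) := by
    intro L hL
    simp only [mul_one]
    congr 1
    by_cases hr : Reaches L S x
    · rw [if_pos hr, if_pos ((h L hL).mp hr)]
    · rw [if_neg hr, if_neg (fun hh => hr ((h L hL).mpr hh))]
  rw [Finset.sum_congr rfl hstep,
    factor2 p hE (fun M => if Reaches M S x then (1:ℝ) else 0) (fun _ => (1:ℝ))]
  simp only [mul_one, sum_edgeWeight]
  rfl

end Core2

section TreeAux
variable [Fintype V] [DecidableEq V] (T : SimpleGraph V) [DecidableRel T.Adj] (u : V)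

/-- Edges of the bidirected tree avoiding the vertex `u`. -/
def Enou : Finset (V × V) := (treeEdges T).filter (fun e => e.1 ≠ u ∧ e.2 ≠ u)

/-- The component of `w` after deleting vertex `u`. -/
def Cw (w : V) : Finset V := comp (Enou T u) w

variable {T u}

lemma mem_treeEdges {e : V × V} : e ∈ treeEdges T ↔ T.Adj e.1 e.2 := by
  simp [treeEdges]

lemma mem_Enou {e : V × V} : e ∈ Enou T u ↔ T.Adj e.1 e.2 ∧ e.1 ≠ u ∧ e.2 ≠ u := by
  simp [Enou, mem_treeEdges, and_assoc]

lemma mem_Cw {w x : V} :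
    x ∈ Cw T u w ↔ Relation.ReflTransGen (fun a b => (a, b) ∈ Enou T u) w x := by
  simp [Cw, comp]

lemma Enou_symm {a b : V} (h : (a, b) ∈ Enou T u) : (b, a) ∈ Enou T u := by
  rw [mem_Enou] at h ⊢
  exact ⟨h.1.symm, h.2.2, h.2.1⟩

lemma chain_symm {a b : V}
    (h : Relation.ReflTransGen (fun a b => (a, b) ∈ Enou T u) a b) :
    Relation.ReflTransGen (fun a b => (a, b) ∈ Enou T u) b a :=
  haveI : Std.Symm (fun a b : V => (a, b) ∈ Enou T u) := ⟨fun _ _ hxy => Enou_symm hxy⟩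
  Relation.ReflTransGen.stdSymm.symm _ _ h

lemma Cw_self {w : V} : w ∈ Cw T u w := mem_Cw.mpr Relation.ReflTransGen.refl

lemma u_not_mem_Cw {w : V} (hw : w ≠ u) : u ∉ Cw T u w := by
  intro h
  rcases (mem_Cw.mp h).cases_tail with h' | ⟨c, _, hcu⟩
  · exact hw h'.symm
  · exact (mem_Enou.mp hcu).2.2 rfl

lemma mem_Cw_of_rel {w a b : V} (ha : a ∈ Cw T u w) (hab : (a, b) ∈ Enou T u) :
    b ∈ Cw T u w :=
  mem_Cw.mpr ((mem_Cw.mp ha).tail hab)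

lemma mem_Cw_of_rel' {w a b : V} (hb : b ∈ Cw T u w) (hab : (a, b) ∈ Enou T u) :
    a ∈ Cw T u w :=
  mem_Cw.mpr ((mem_Cw.mp hb).tail (Enou_symm hab))

lemma walk_of_chain {w x : V} (hw : w ≠ u)
    (h : Relation.ReflTransGen (fun a b => (a, b) ∈ Enou T u) w x) :
    ∃ W : T.Walk w x, u ∉ W.support := by
  induction h with
  | refl => exact ⟨SimpleGraph.Walk.nil, by simp [Ne.symm hw]⟩
  | @tail b c hwb hbc ih =>
    obtain ⟨W, hW⟩ := ih
    have h' := mem_Enou.mp hbc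
    refine ⟨W.append h'.1.toWalk, ?_⟩
    rw [SimpleGraph.Walk.support_append]
    intro hmem
    rcases List.mem_append.mp hmem with hmem | hmem
    · exact hW hmem
    · simp [SimpleGraph.Adj.toWalk] at hmem
      exact h'.2.2 hmem.symm

lemma chain_of_walk {b a : V} (q : T.Walk b a) (hq : u ∉ q.support) :
    Relation.ReflTransGen (fun x y => (x, y) ∈ Enou T u) b a := by
  induction q with
  | nil => exact Relation.ReflTransGen.refl
  | @cons b c a h q ih =>
    rw [SimpleGraph.Walk.support_cons] at hq
    have hb : b ≠ u := fun hh => hq (by simp [hh])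
    have hc : c ≠ u := fun hh =>
      hq (List.mem_cons_of_mem _ (hh ▸ q.start_mem_support))
    exact Relation.ReflTransGen.head (mem_Enou.mpr ⟨h, hb, hc⟩)
      (ih (fun hh => hq (List.mem_cons_of_mem _ hh)))

/-- In a tree, a neighbor of `u` lying in the `u`-free component of another
neighbor `w` must equal `w`. -/
lemma neighbor_eq_of_mem_Cw (hT : T.IsTree) {w x : V} (hw : T.Adj u w) (hx : T.Adj u x)
    (hmem : x ∈ Cw T u w) : x = w := by
  by_contra hne
  obtain ⟨W, hW⟩ := walk_of_chain hw.ne' (mem_Cw.mp hmem)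
  have hP1 : u ∉ (W.toPath : T.Walk w x).support :=
    fun h => hW (SimpleGraph.Walk.support_toPath_subset W h)
  have hwx : w ≠ x := fun h => hne h.symm
  have hP2 : (SimpleGraph.Walk.cons hw.symm hx.toWalk).IsPath := by
    rw [SimpleGraph.Walk.isPath_def]
    simp [SimpleGraph.Adj.toWalk, hw.ne', hx.ne, hwx]
  have := hT.IsAcyclic.path_unique W.toPath ⟨_, hP2⟩
  apply hP1
  rw [this]
  simp

lemma Cw_eq_of_mem (hT : T.IsTree) {w x a : V} (hw : T.Adj u w) (hx : T.Adj u x)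
    (haw : a ∈ Cw T u w) (hax : a ∈ Cw T u x) : w = x := by
  have hchain : Relation.ReflTransGen (fun p q => (p, q) ∈ Enou T u) w x :=
    (mem_Cw.mp haw).trans (chain_symm (mem_Cw.mp hax))
  exact (neighbor_eq_of_mem_Cw hT hw hx (mem_Cw.mpr hchain)).symm

lemma exists_mem_Cw (hT : T.IsTree) {a : V} (ha : a ≠ u) :
    ∃ w, T.Adj u w ∧ a ∈ Cw T u w := by
  obtain ⟨W0⟩ := hT.isConnected.preconnected u a
  obtain ⟨W, hWp⟩ := W0.toPath
  cases W with
  | nil => exact absurd rfl ha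
  | @cons _ b _ hadj q =>
    refine ⟨b, hadj, mem_Cw.mpr (chain_of_walk q ?_)⟩
    have := hWp.support_nodup
    rw [SimpleGraph.Walk.support_cons] at this
    exact (List.nodup_cons.mp this).1

end TreeAux

section Claims
variable [Fintype V] [DecidableEq V] {T : SimpleGraph V} [DecidableRel T.Adj] {u : V}

/-- Localization: if `(u,w) ∉ L`, any live chain ending in the `u`-free component of a
neighbor `w` stays inside that component. -/
lemma reaches_localize (hT : T.IsTree) {w : V} (hw : T.Adj u w) {L : Finset (V × V)}
    (hL : L ⊆ treeEdges T) (huw : (u, w) ∉ L) {a b : V}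
    (hchain : Relation.ReflTransGen (fun x y => (x, y) ∈ L) a b) (hb : b ∈ Cw T u w) :
    a ∈ Cw T u w ∧ Relation.ReflTransGen
      (fun x y => (x, y) ∈ L.filter (fun e => e.1 ∈ Cw T u w ∧ e.2 ∈ Cw T u w)) a b := by
  induction hchain using Relation.ReflTransGen.head_induction_on with
  | refl => exact ⟨hb, Relation.ReflTransGen.refl⟩
  | @head a c hac hcb ih =>
    obtain ⟨hcC, hchainF⟩ := ih
    have hcu : c ≠ u := fun h => u_not_mem_Cw hw.ne' (h ▸ hcC)
    have hadj : T.Adj a c := mem_treeEdges.mp (hL hac)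
    have hau : a ≠ u := by
      rintro rfl
      exact huw ((neighbor_eq_of_mem_Cw hT hw hadj hcC) ▸ hac)
    have hEnou : (a, c) ∈ Enou T u := mem_Enou.mpr ⟨hadj, hau, hcu⟩
    have haC : a ∈ Cw T u w := mem_Cw_of_rel' hcC hEnou
    exact ⟨haC, Relation.ReflTransGen.head
      (Finset.mem_filter.mpr ⟨hac, haC, hcC⟩) hchainF⟩

/-- Any live chain reaching `u` last enters through some neighbor `w ≠ v`, and before
that stays in the `u`-free component of `w`. -/
lemma reaches_to_u (hT : T.IsTree) {v : V} {L : Finset (V × V)}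
    (hL : L ⊆ treeEdges T \ {(v, u), (u, v)}) {a : V}
    (hchain : Relation.ReflTransGen (fun x y => (x, y) ∈ L) a u) (ha : a ≠ u) :
    ∃ w, T.Adj u w ∧ w ≠ v ∧ (w, u) ∈ L ∧ a ∈ Cw T u w ∧
      Relation.ReflTransGen
        (fun x y => (x, y) ∈ L.filter (fun e => e.1 ∈ Cw T u w ∧ e.2 ∈ Cw T u w)) a w := by
  revert ha
  induction hchain using Relation.ReflTransGen.head_induction_on with
  | refl => exact fun h => absurd rfl h
  | @head a c hac hcu ih =>
    intro ha
    have hmem := hL hac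
    rw [Finset.mem_sdiff] at hmem
    have hadj : T.Adj a c := mem_treeEdges.mp hmem.1
    by_cases hc : c = u
    · subst hc
      have hav : a ≠ v := by
        rintro rfl
        exact hmem.2 (by simp)
      exact ⟨a, hadj.symm, hav, hac, Cw_self, Relation.ReflTransGen.refl⟩
    · obtain ⟨w, hw, hwv, hwu, hcC, hch⟩ := ih hc
      have hEnou : (a, c) ∈ Enou T u := mem_Enou.mpr ⟨hadj, ha, hc⟩
      have haC : a ∈ Cw T u w := mem_Cw_of_rel' hcC hEnou
      exact ⟨w, hw, hwv, hwu, haC, Relation.ReflTransGen.head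
        (Finset.mem_filter.mpr ⟨hac, haC, hcC⟩) hch⟩

end Claims

section Main
variable [Fintype V] [DecidableEq V] (T : SimpleGraph V) [DecidableRel T.Adj] (u v : V)

/-- Edges with both endpoints in the `u`-free component of `w`. -/
def subE (w : V) : Finset (V × V) :=
  (treeEdges T).filter (fun e => e.1 ∈ Cw T u w ∧ e.2 ∈ Cw T u w)

/-- The branch of the edge set `treeEdges T \ {(v,u),(u,v)}` associated with the
neighbor `w` of `u`. -/
def blockE (w : V) : Finset (V × V) :=
  ((treeEdges T) \ {(v, u), (u, v)}).filter
    (fun e => (e.1 ∈ Cw T u w ∧ e.2 ∈ Cw T u w) ∨ e = (w, u) ∨ e = (u, w))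

variable {T u v}

lemma blockE_subset {w : V} : blockE T u v w ⊆ (treeEdges T) \ {(v, u), (u, v)} :=
  Finset.filter_subset _ _

lemma blockE_cover (hT : T.IsTree) (hv : T.Adj u v) :
    (treeEdges T) \ {(v, u), (u, v)} = (T.neighborFinset u).biUnion (blockE T u v) := by
  ext e
  simp only [Finset.mem_biUnion]
  constructor
  · intro he
    obtain ⟨a, b⟩ := e
    have heE : (a, b) ∈ treeEdges T := (Finset.mem_sdiff.mp he).1
    have hadj : T.Adj a b := mem_treeEdges.mp heE
    by_cases hau : a = u
    · exact ⟨b, T.mem_neighborFinset u b |>.mpr (hau ▸ hadj),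
        Finset.mem_filter.mpr ⟨he, Or.inr (Or.inr (by rw [hau]))⟩⟩
    · by_cases hbu : b = u
      · exact ⟨a, T.mem_neighborFinset u a |>.mpr (hbu ▸ hadj.symm),
          Finset.mem_filter.mpr ⟨he, Or.inr (Or.inl (by rw [hbu]))⟩⟩
      · obtain ⟨w, hw, haC⟩ := exists_mem_Cw hT hau
        have hbC : b ∈ Cw T u w := mem_Cw_of_rel haC (mem_Enou.mpr ⟨hadj, hau, hbu⟩)
        exact ⟨w, T.mem_neighborFinset u w |>.mpr hw,
          Finset.mem_filter.mpr ⟨he, Or.inl ⟨haC, hbC⟩⟩⟩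
  · rintro ⟨w, _, hmem⟩
    exact blockE_subset hmem

lemma blockE_disjoint (hT : T.IsTree) :
    ∀ w ∈ T.neighborFinset u, ∀ x ∈ T.neighborFinset u, w ≠ x →
      Disjoint (blockE T u v w) (blockE T u v x) := by
  intro w hw x hx hne
  have hwAdj : T.Adj u w := (T.mem_neighborFinset u w).mp hw
  have hxAdj : T.Adj u x := (T.mem_neighborFinset u x).mp hx
  have huCw : u ∉ Cw T u w := u_not_mem_Cw hwAdj.ne'
  have huCx : u ∉ Cw T u x := u_not_mem_Cw hxAdj.ne'
  rw [Finset.disjoint_left]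
  intro e hew hex
  have hw1 := (Finset.mem_filter.mp hew).2
  have hx1 := (Finset.mem_filter.mp hex).2
  rcases hw1 with hw1 | hw1 | hw1 <;> rcases hx1 with hx1 | hx1 | hx1
  · exact hne (Cw_eq_of_mem hT hwAdj hxAdj hw1.1 hx1.1)
  · rw [hx1] at hw1; exact huCw hw1.2
  · rw [hx1] at hw1; exact huCw hw1.1
  · rw [hw1] at hx1; exact huCx hx1.2
  · rw [hw1] at hx1; injection hx1 with h1 h2
    first | exact hne h1 | exact hne h1.symm
  · rw [hw1] at hx1; injection hx1 with h1 h2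
    first | exact hwAdj.ne' h1 | exact hwAdj.ne' h1.symm
  · rw [hw1] at hx1; exact huCx hx1.1
  · rw [hw1] at hx1; injection hx1 with h1 h2
    first | exact hxAdj.ne' h1 | exact hxAdj.ne' h1.symm | exact hwAdj.ne' h2 | exact hwAdj.ne' h2.symm
  · rw [hw1] at hx1; injection hx1 with h1 h2
    first | exact hne h2 | exact hne h2.symm

end Main

section Factors
variable [Fintype V] [DecidableEq V]

lemma sum_singleton_mem (p : V × V → ℝ) (a : V × V) :
    ∑ M ∈ ({a} : Finset (V × V)).powerset,
      edgeWeight {a} p M * (if a ∈ M then (1:ℝ) else 0) = p a := by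
  rw [show ({a} : Finset (V × V)) = insert a ∅ from rfl,
    Finset.sum_powerset_insert (by simp)]
  simp [edgeWeight]

lemma sum_pair_mem (p : V × V → ℝ) {a b : V × V} (hab : a ≠ b) :
    ∑ M ∈ ({a, b} : Finset (V × V)).powerset,
      edgeWeight {a, b} p M * (if a ∈ M then (1:ℝ) else 0) = p a := by
  rw [Finset.insert_eq]
  have hd : Disjoint ({a} : Finset (V × V)) {b} := Finset.disjoint_singleton.mpr hab
  have hstep : ∀ M ∈ (({a} : Finset (V × V)) ∪ {b}).powerset,
      edgeWeight ({a} ∪ {b}) p M * (if a ∈ M then (1:ℝ) else 0) =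
      edgeWeight ({a} ∪ {b}) p M *
        ((fun M1 => if a ∈ M1 then (1:ℝ) else 0) (M ∩ {a}) * (fun _ => (1:ℝ)) (M ∩ {b})) := by
    intro M hM
    simp only [mul_one]
    congr 1
    by_cases h : a ∈ M
    · rw [if_pos h, if_pos (Finset.mem_inter.mpr ⟨h, Finset.mem_singleton_self a⟩)]
    · rw [if_neg h, if_neg (fun hh => h (Finset.mem_inter.mp hh).1)]
  rw [Finset.sum_congr rfl hstep,
    factor2 p hd (fun M1 => if a ∈ M1 then (1:ℝ) else 0) (fun _ => (1:ℝ))]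
  simp only [mul_one, sum_edgeWeight, sum_singleton_mem]

variable {T : SimpleGraph V} [DecidableRel T.Adj] {u v : V}

/-- The branch factor function. -/
def FF (T : SimpleGraph V) [DecidableRel T.Adj] (u : V) (S : Finset V) (w : V)
    (M : Finset (V × V)) : ℝ :=
  1 - (if ((w, u) ∈ M ∧
      Reaches (M.filter (fun e => e.1 ∈ Cw T u w ∧ e.2 ∈ Cw T u w)) S w) then 1 else 0)

lemma subE_subset_sdiff {w : V} (hw : T.Adj u w) :
    subE T u w ⊆ treeEdges T \ {(u, w), (w, u)} := by
  intro e he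
  have h1 := (Finset.mem_filter.mp he).1
  have h2 := (Finset.mem_filter.mp he).2
  have huC : u ∉ Cw T u w := u_not_mem_Cw hw.ne'
  rw [Finset.mem_sdiff]
  refine ⟨h1, ?_⟩
  intro hh
  rcases Finset.mem_insert.mp hh with hh | hh
  · rw [hh] at h2; exact huC h2.1
  · rw [Finset.mem_singleton.mp hh] at h2; exact huC h2.2

lemma ap_sdiff_eq (hT : T.IsTree) {w : V} (hw : T.Adj u w) (p : V × V → ℝ) (S : Finset V) :
    ap (treeEdges T \ {(u, w), (w, u)}) p S w = ap (subE T u w) p S w := by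
  have hsub : subE T u w ⊆ treeEdges T \ {(u, w), (w, u)} := subE_subset_sdiff hw
  have hU : treeEdges T \ {(u, w), (w, u)} =
      subE T u w ∪ ((treeEdges T \ {(u, w), (w, u)}) \ subE T u w) :=
    (Finset.union_sdiff_of_subset hsub).symm
  rw [hU]
  refine ap_split p Finset.disjoint_sdiff S w ?_
  intro L hL
  rw [Finset.mem_powerset, ← hU] at hL
  constructor
  · rintro ⟨s, hs, hc⟩
    have hLE : L ⊆ treeEdges T := hL.trans Finset.sdiff_subset
    have huwL : (u, w) ∉ L := by
      intro hh
      have := Finset.mem_sdiff.mp (hL hh)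
      exact this.2 (by simp)
    obtain ⟨-, hch⟩ := reaches_localize hT hw hLE huwL hc Cw_self
    refine ⟨s, hs, ?_⟩
    refine Relation.ReflTransGen.mono (fun x y hxy => ?_) _ _ hch
    have h1 := Finset.mem_filter.mp hxy
    exact Finset.mem_inter.mpr ⟨h1.1, Finset.mem_filter.mpr ⟨hLE h1.1, h1.2⟩⟩
  · intro h
    exact Reaches.mono Finset.inter_subset_left h

lemma factor_w (hT : T.IsTree) (hv : T.Adj u v) {w : V} (hw : T.Adj u w) (hwv : w ≠ v)
    (p : V × V → ℝ) (S : Finset V) :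
    ∑ M ∈ (blockE T u v w).powerset,
      edgeWeight (blockE T u v w) p M * FF T u S w M =
    1 - ap (subE T u w) p S w * p (w, u) := by
  have hwu : w ≠ u := hw.ne'
  have huC : u ∉ Cw T u w := u_not_mem_Cw hwu
  set pair : Finset (V × V) := {(w, u), (u, w)} with hpair
  have hblock : blockE T u v w = subE T u w ∪ pair := by
    ext e
    simp only [blockE, subE, Finset.mem_union, Finset.mem_filter]
    constructor
    · rintro ⟨he', hc | hc | hc⟩
      · exact Or.inl ⟨(Finset.mem_sdiff.mp he').1, hc⟩
      · exact Or.inr (by simp [hpair, hc])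
      · exact Or.inr (by simp [hpair, hc])
    · rintro (he | he)
      · obtain ⟨h1, h2⟩ := he
        refine ⟨Finset.mem_sdiff.mpr ⟨h1, ?_⟩, Or.inl h2⟩
        intro hh
        rcases Finset.mem_insert.mp hh with hh | hh
        · rw [hh] at h2; exact huC h2.2
        · rw [Finset.mem_singleton.mp hh] at h2; exact huC h2.1
      · rcases Finset.mem_insert.mp he with hh | hh
        · refine ⟨Finset.mem_sdiff.mpr ⟨mem_treeEdges.mpr (by rw [hh]; exact hw.symm), ?_⟩,
            Or.inr (Or.inl hh)⟩

          rw [hh]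
          intro hmem
          rcases Finset.mem_insert.mp hmem with h3 | h3
          · exact hwv (congrArg Prod.fst (h3 : ((w,u) : V × V) = (v,u)))
          · exact hwu (congrArg Prod.fst (Finset.mem_singleton.mp h3))
        · rw [Finset.mem_singleton.mp hh]
          refine ⟨Finset.mem_sdiff.mpr ⟨mem_treeEdges.mpr hw, ?_⟩, Or.inr (Or.inr rfl)⟩
          intro hmem
          rcases Finset.mem_insert.mp hmem with h3 | h3
          · exact hwu (congrArg Prod.snd (h3 : ((u,w) : V × V) = (v,u)))
          · exact hwv (congrArg Prod.snd (Finset.mem_singleton.mp h3))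
  have hdisj : Disjoint (subE T u w) pair := by
    rw [Finset.disjoint_right]
    intro e he hs
    have h2 := (Finset.mem_filter.mp (by simpa [subE] using hs : e ∈ (treeEdges T).filter
      (fun e => e.1 ∈ Cw T u w ∧ e.2 ∈ Cw T u w))).2
    rcases Finset.mem_insert.mp he with hh | hh
    · rw [hh] at h2; exact huC h2.2
    · rw [Finset.mem_singleton.mp hh] at h2; exact huC h2.1
  have hstep : ∀ M ∈ (blockE T u v w).powerset,
      edgeWeight (blockE T u v w) p M * FF T u S w M =
      edgeWeight (subE T u w ∪ pair) p M * (1 * 1) -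
      edgeWeight (subE T u w ∪ pair) p M *
        ((fun M1 => if Reaches M1 S w then (1:ℝ) else 0) (M ∩ subE T u w) *
         (fun M2 => if (w, u) ∈ M2 then (1:ℝ) else 0) (M ∩ pair)) := by
    intro M hM
    rw [Finset.mem_powerset] at hM
    have hmemiff : ((w, u) ∈ M) ↔ ((w, u) ∈ M ∩ pair) := by
      constructor
      · intro h; exact Finset.mem_inter.mpr ⟨h, by simp [hpair]⟩
      · intro h; exact (Finset.mem_inter.mp h).1
    have hfil : M.filter (fun e => e.1 ∈ Cw T u w ∧ e.2 ∈ Cw T u w) = M ∩ subE T u w := by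
      ext e
      simp only [subE, Finset.mem_filter, Finset.mem_inter]
      constructor
      · rintro ⟨heM, hc⟩
        have heb : e ∈ blockE T u v w := hM heM
        have : e ∈ treeEdges T :=
          (Finset.mem_sdiff.mp ((Finset.mem_filter.mp (by simpa [blockE] using heb :
            e ∈ ((treeEdges T) \ {(v, u), (u, v)}).filter
              (fun e => (e.1 ∈ Cw T u w ∧ e.2 ∈ Cw T u w) ∨ e = (w, u) ∨ e = (u, w)))).1)).1
        exact ⟨heM, this, hc⟩
      · rintro ⟨heM, _, hc⟩
        exact ⟨heM, hc⟩
    rw [← hblock, FF, hfil]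
    dsimp only
    by_cases h1 : (w, u) ∈ M
    · by_cases h2 : Reaches (M ∩ subE T u w) S w
      · rw [if_pos ⟨h1, h2⟩, if_pos h2, if_pos (hmemiff.mp h1)]; ring
      · rw [if_neg (fun hh => h2 hh.2), if_neg h2]; ring
    · by_cases h2 : Reaches (M ∩ subE T u w) S w
      · rw [if_pos h2, if_neg (fun hh => h1 hh.1), if_neg (fun hh => h1 (hmemiff.mpr hh))]; ring
      · rw [if_neg (fun hh => h2 hh.2), if_neg h2]; ring
  rw [Finset.sum_congr rfl hstep, hblock, Finset.sum_sub_distrib]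
  rw [factor2 p hdisj (fun M1 => if Reaches M1 S w then (1:ℝ) else 0)
    (fun M2 => if (w, u) ∈ M2 then (1:ℝ) else 0)]
  have hab : ((w, u) : V × V) ≠ (u, w) := fun h => hwu (congrArg Prod.fst h)
  rw [show (∑ M ∈ pair.powerset, edgeWeight pair p M * (if (w, u) ∈ M then (1:ℝ) else 0))
      = p (w, u) from sum_pair_mem p hab]
  simp only [mul_one, sum_edgeWeight]
  rfl

end Factors

section Factors2
variable [Fintype V] [DecidableEq V] {T : SimpleGraph V} [DecidableRel T.Adj] {u v : V}

lemma factor_v (p : V × V → ℝ) (S : Finset V) :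
    ∑ M ∈ (blockE T u v v).powerset,
      edgeWeight (blockE T u v v) p M * FF T u S v M = 1 := by
  have hstep : ∀ M ∈ (blockE T u v v).powerset,
      edgeWeight (blockE T u v v) p M * FF T u S v M =
      edgeWeight (blockE T u v v) p M := by
    intro M hM
    rw [Finset.mem_powerset] at hM
    have hvu : ((v, u) : V × V) ∉ M := by
      intro hmem
      have := (Finset.mem_filter.mp (by simpa [blockE] using hM hmem :
        ((v, u) : V × V) ∈ ((treeEdges T) \ {(v, u), (u, v)}).filter
          (fun e => (e.1 ∈ Cw T u v ∧ e.2 ∈ Cw T u v) ∨ e = (v, u) ∨ e = (u, v)))).1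
      exact (Finset.mem_sdiff.mp this).2 (by simp)
    rw [FF, if_neg (fun hh => hvu hh.1)]
    ring
  rw [Finset.sum_congr rfl hstep, sum_edgeWeight]

lemma indicator_eq (hT : T.IsTree) (hv : T.Adj u v) {S : Finset V} (hu : u ∉ S)
    {L : Finset (V × V)} (hL : L ⊆ treeEdges T \ {(v, u), (u, v)}) :
    (if Reaches L S u then (1:ℝ) else 0) =
      1 - ∏ w ∈ T.neighborFinset u, FF T u S w (L ∩ blockE T u v w) := by
  have hA : ∀ w ∈ T.neighborFinset u, FF T u S w (L ∩ blockE T u v w) =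
      1 - (if ((w, u) ∈ L ∧
        Reaches (L.filter (fun e => e.1 ∈ Cw T u w ∧ e.2 ∈ Cw T u w)) S w)
        then (1:ℝ) else 0) := by
    intro w hwN
    have hmemiff : ((w, u) ∈ L ∩ blockE T u v w) ↔ ((w, u) ∈ L) := by
      constructor
      · exact fun h => (Finset.mem_inter.mp h).1
      · intro h
        exact Finset.mem_inter.mpr ⟨h, Finset.mem_filter.mpr ⟨hL h, Or.inr (Or.inl rfl)⟩⟩
    have hfil : (L ∩ blockE T u v w).filter
          (fun e => e.1 ∈ Cw T u w ∧ e.2 ∈ Cw T u w) =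
        L.filter (fun e => e.1 ∈ Cw T u w ∧ e.2 ∈ Cw T u w) := by
      ext e
      constructor
      · intro he
        have h1 := Finset.mem_filter.mp he
        exact Finset.mem_filter.mpr ⟨(Finset.mem_inter.mp h1.1).1, h1.2⟩
      · intro he
        have h1 := Finset.mem_filter.mp he
        refine Finset.mem_filter.mpr ⟨Finset.mem_inter.mpr ⟨h1.1, ?_⟩, h1.2⟩
        exact Finset.mem_filter.mpr ⟨hL h1.1, Or.inl h1.2⟩
    rw [FF, hfil]
    by_cases h1 : (w, u) ∈ L
    · by_cases h2 : Reaches (L.filter (fun e => e.1 ∈ Cw T u w ∧ e.2 ∈ Cw T u w)) S w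
      · rw [if_pos ⟨hmemiff.mpr h1, h2⟩, if_pos ⟨h1, h2⟩]
      · rw [if_neg (fun hh => h2 hh.2), if_neg (fun hh => h2 hh.2)]
    · rw [if_neg (fun hh => h1 (hmemiff.mp hh.1)), if_neg (fun hh => h1 hh.1)]
  have hiff : Reaches L S u ↔ ∃ w ∈ T.neighborFinset u, ((w, u) ∈ L ∧
      Reaches (L.filter (fun e => e.1 ∈ Cw T u w ∧ e.2 ∈ Cw T u w)) S w) := by
    constructor
    · rintro ⟨s, hs, hc⟩
      have hsu : s ≠ u := fun h => hu (h ▸ hs)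
      obtain ⟨w, hwAdj, hwv, hwuL, -, hch⟩ := reaches_to_u hT hL hc hsu
      exact ⟨w, (T.mem_neighborFinset u w).mpr hwAdj, hwuL, ⟨s, hs, hch⟩⟩
    · rintro ⟨w, hwN, hwuL, s, hs, hch⟩
      refine ⟨s, hs, ?_⟩
      exact (Relation.ReflTransGen.mono
        (fun a b hab => (Finset.mem_filter.mp hab).1) _ _ hch).tail hwuL
  by_cases hre : Reaches L S u
  · rw [if_pos hre]
    obtain ⟨w, hwN, hAw⟩ := hiff.mp hre
    rw [Finset.prod_eq_zero hwN (by rw [hA w hwN, if_pos hAw]; ring)]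
    norm_num
  · rw [if_neg hre]
    rw [Finset.prod_eq_one (fun w hwN => by
      rw [hA w hwN, if_neg (fun hAw => hre (hiff.mpr ⟨w, hwN, hAw⟩))]; ring)]
    norm_num

end Factors2


/-- On a bidirected tree with seed set `S` and boost set `B`, for every non-seed
node `u` and every neighbor `v` of `u`:
`ap_B(u\v) = 1 − ∏_{w ∈ N(u) \ {v}} (1 − ap_B(w\u) · p^B_{wu})`. -/
theorem apSub_eq_prod_neighbors [Fintype V] [DecidableEq V]
    (T : SimpleGraph V) [DecidableRel T.Adj] (hT : T.IsTree)
    (p p' : V × V → ℝ)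
    (hp0 : ∀ e, 0 ≤ p e) (hpp' : ∀ e, p e ≤ p' e) (hp'1 : ∀ e, p' e ≤ 1)
    (S B : Finset V) (u : V) (hu : u ∉ S) (v : V) (hv : T.Adj u v) :
    apSub (treeEdges T) (pB p p' B) S u v =
      1 - ∏ w ∈ (T.neighborFinset u).erase v,
        (1 - apSub (treeEdges T) (pB p p' B) S w u * pB p p' B (w, u)) := by
  classical
  set q := pB p p' B with hq
  have hvN : v ∈ T.neighborFinset u := (T.mem_neighborFinset u v).mpr hv
  have h1 : apSub (treeEdges T) q S u v
      = ap (treeEdges T \ {(v, u), (u, v)}) q S u := rfl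
  rw [h1]
  have hcov : treeEdges T \ {(v, u), (u, v)}
      = (T.neighborFinset u).biUnion (blockE T u v) := blockE_cover hT hv
  calc ap (treeEdges T \ {(v, u), (u, v)}) q S u
      = ∑ L ∈ (treeEdges T \ {(v, u), (u, v)}).powerset,
          (edgeWeight (treeEdges T \ {(v, u), (u, v)}) q L -
           edgeWeight (treeEdges T \ {(v, u), (u, v)}) q L *
             ∏ w ∈ T.neighborFinset u, FF T u S w (L ∩ blockE T u v w)) := by
        rw [ap]
        refine Finset.sum_congr rfl fun L hL => ?_
        rw [Finset.mem_powerset] at hL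
        rw [indicator_eq hT hv hu hL]
        ring
    _ = 1 - ∏ w ∈ T.neighborFinset u, ∑ M ∈ (blockE T u v w).powerset,
          edgeWeight (blockE T u v w) q M * FF T u S w M := by
        rw [Finset.sum_sub_distrib, sum_edgeWeight]
        congr 1
        rw [hcov]
        exact factorN q (T.neighborFinset u) (blockE T u v) (blockE_disjoint hT) (FF T u S)
    _ = 1 - ∏ w ∈ (T.neighborFinset u).erase v,
          (1 - apSub (treeEdges T) q S w u * q (w, u)) := by
        rw [← Finset.mul_prod_erase _ _ hvN, factor_v q S, one_mul]
        congr 1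
        refine Finset.prod_congr rfl fun w hw => ?_
        have hwv : w ≠ v := (Finset.mem_erase.mp hw).1
        have hwAdj : T.Adj u w := (T.mem_neighborFinset u w).mp (Finset.mem_erase.mp hw).2
        rw [factor_w hT hv hwAdj hwv q S,
          show apSub (treeEdges T) q S w u = ap (subE T u w) q S w from
            ap_sdiff_eq hT hwAdj q S]

end
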